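/- Under the setup of the previous statements (pathwise $\varepsilon$-approximations with fixed continuous driving path $g$, and pointwise limit $Y$ finite on $[0,T]$ with convergent drift integrals), the limit process satisfies $Y(t) > 0$ for Lebesgue-almost every $t\in[0,T]$. -/

import Mathlib

open Filter Topology MeasureTheory Set

private lemma if_pos_eq_max (x : ℝ) : (if 0 < x then x else 0) = max x 0 := by
  split_ifs with h
  · exact (max_eq_left h.le).symm
  · exact (max_eq_right (not_lt.mp h)).symm

/-- Corollary 4 (pathwise): the limit process Y is positive almost everywhere
on [0,T]. -/
theorem limit_process_positive_ae
    (Y₀ k a σ T : ℝ) (hY₀ : 0 < Y₀) (hk : 0 < k) (ha : 0 < a) (hσ : 0 < σ) (hT : 0 < T)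
    (g : ℝ → ℝ) (hg : Continuous g) (hg0 : g 0 = 0)
    (Y : ℝ → ℝ → ℝ) (Ylim : ℝ → ℝ)
    (hYc : ∀ ε : ℝ, 0 < ε → Continuous (Y ε))
    (hYeq : ∀ ε : ℝ, 0 < ε → ∀ t ∈ Set.Icc (0:ℝ) T,
      Y ε t = Y₀ + (∫ s in (0:ℝ)..t, k / ((if 0 < Y ε s then Y ε s else 0) + ε))
        - a * (∫ s in (0:ℝ)..t, Y ε s) + σ * g t)
    (hlim : ∀ t ∈ Set.Icc (0:ℝ) T,
      Tendsto (fun ε => Y ε t) (𝓝[>] 0) (𝓝 (Ylim t)))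
    (L : ℝ)
    (hL : Tendsto
      (fun ε => ∫ s in (0:ℝ)..T, k / ((if 0 < Y ε s then Y ε s else 0) + ε))
      (𝓝[>] 0) (𝓝 L)) :
    ∀ᵐ t ∂(volume.restrict (Set.Icc (0:ℝ) T)), 0 < Ylim t := by
  rw [ae_iff]
  by_contra hA
  -- the bad set and its (restricted) measure
  set A : Set ℝ := {t | ¬ 0 < Ylim t} with hAdef
  set m : ENNReal := (volume.restrict (Set.Icc (0:ℝ) T)) A with hmdef
  have hmIcc : m ≤ volume (Set.Icc (0:ℝ) T) := by
    calc m ≤ (volume.restrict (Set.Icc (0:ℝ) T)) Set.univ := measure_mono (subset_univ _)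
    _ = volume (Set.Icc (0:ℝ) T) := by
        rw [Measure.restrict_apply MeasurableSet.univ, Set.univ_inter]
  have hmtop : m ≠ ⊤ := by
    refine ne_top_of_le_ne_top ?_ hmIcc
    simp [Real.volume_Icc]
  have hm0 : m ≠ 0 := hA
  have hmpos : 0 < m.toReal := ENNReal.toReal_pos hm0 hmtop
  -- choose a sequence εₙ → 0 in (0, ∞)
  set e : ℕ → ℝ := fun n => 1 / (n + 1) with hedef
  have hepos : ∀ n, 0 < e n := fun n => by positivity
  have he0 : Tendsto e atTop (𝓝 0) := tendsto_one_div_add_atTop_nhds_zero_nat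
  have heW : Tendsto e atTop (𝓝[>] 0) :=
    tendsto_nhdsWithin_of_tendsto_nhds_of_eventually_within _ he0
      (Filter.Eventually.of_forall fun n => hepos n)
  -- the drift integrals along the sequence
  set I : ℕ → ℝ := fun n =>
    ∫ s in (0:ℝ)..T, k / ((if 0 < Y (e n) s then Y (e n) s else 0) + e n) with hIdef
  have hIL : Tendsto I atTop (𝓝 L) := hL.comp heW
  have hInonneg : ∀ n, 0 ≤ I n := by
    intro n
    apply intervalIntegral.integral_nonneg hT.le
    intro s _
    have h1 : 0 < (if 0 < Y (e n) s then Y (e n) s else 0) + e n := by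
      rw [if_pos_eq_max]
      exact add_pos_of_nonneg_of_pos (le_max_right _ _) (hepos n)
    positivity
  have hL0 : 0 ≤ L := ge_of_tendsto' hIL hInonneg
  -- the threshold δ
  set δ : ℝ := k * m.toReal / (4 * (L + 1)) with hδdef
  have hδpos : 0 < δ := by
    apply div_pos (mul_pos hk hmpos)
    positivity
  -- the increasing family of sets where Y (e m) ≤ δ for all m ≥ n
  set S : ℕ → Set ℝ := fun n =>
    Set.Icc (0:ℝ) T ∩ ⋂ (j : ℕ) (_ : n ≤ j), {t | Y (e j) t ≤ δ} with hSdef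
  have hSmeas : ∀ n, MeasurableSet (S n) := by
    intro n
    apply measurableSet_Icc.inter
    apply MeasurableSet.iInter; intro j
    apply MeasurableSet.iInter; intro _
    exact measurableSet_le ((hYc _ (hepos j)).measurable) measurable_const
  have hSmono : Monotone S := by
    intro p q hpq
    apply Set.inter_subset_inter_right
    intro t ht
    simp only [Set.mem_iInter, Set.mem_setOf_eq] at ht ⊢
    intro j hj
    exact ht j (hpq.trans hj)
  -- the bad set (within Icc) is covered by the union of the S n
  have hcover : A ∩ Set.Icc (0:ℝ) T ⊆ ⋃ n, S n := by
    intro t ⟨htA, htI⟩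
    have hYlim : Ylim t ≤ 0 := not_lt.mp htA
    have htend : Tendsto (fun n => Y (e n) t) atTop (𝓝 (Ylim t)) :=
      (hlim t htI).comp heW
    have hev : ∀ᶠ n in atTop, Y (e n) t ≤ δ :=
      htend.eventually_le_const (lt_of_le_of_lt hYlim hδpos)
    rw [eventually_atTop] at hev
    obtain ⟨n, hn⟩ := hev
    refine Set.mem_iUnion.mpr ⟨n, htI, ?_⟩
    simp only [Set.mem_iInter, Set.mem_setOf_eq]
    exact hn
  -- extract n₀ with volume (S n₀) > m / 2
  have hmres : m = volume (A ∩ Set.Icc (0:ℝ) T) := by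
    rw [hmdef, Measure.restrict_apply' measurableSet_Icc]
  have hle : m ≤ ⨆ n, volume (S n) := by
    rw [hmres, ← (hSmono.directed_le).measure_iUnion]
    exact measure_mono hcover
  have hhalf : m / 2 < m := ENNReal.half_lt_self hm0 hmtop
  obtain ⟨n₀, hn₀⟩ : ∃ n, m / 2 < volume (S n) := by
    by_contra hcon
    push_neg at hcon
    exact absurd (hle.trans (iSup_le hcon)) (not_le.mpr hhalf)
  -- move to the Ioc version of the set
  set S' : Set ℝ := S n₀ ∩ Set.Ioc (0:ℝ) T with hS'def
  have hS'meas : MeasurableSet S' := (hSmeas n₀).inter measurableSet_Ioc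
  have hS'fin : volume S' ≠ ⊤ := by
    refine ne_top_of_le_ne_top ?_ (measure_mono (Set.inter_subset_right : S' ⊆ _))
    simp [Real.volume_Ioc]
  have hS'big : m / 2 < volume S' := by
    refine lt_of_lt_of_le hn₀ ?_
    have hsub : S n₀ ⊆ S' ∪ {0} := by
      intro t ht
      have htI : t ∈ Set.Icc (0:ℝ) T := ht.1
      rcases eq_or_lt_of_le htI.1 with h | h
      · exact Or.inr (by simp [← h])
      · exact Or.inl ⟨ht, h, htI.2⟩
    calc volume (S n₀) ≤ volume (S' ∪ {0}) := measure_mono hsub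
      _ ≤ volume S' + volume ({0} : Set ℝ) := measure_union_le _ _
      _ = volume S' := by simp
  have hS'toReal : m.toReal / 2 ≤ (volume S').toReal := by
    have hm2 : m / 2 ≠ ⊤ := ne_top_of_le_ne_top hmtop ENNReal.half_le_self
    have := (ENNReal.toReal_le_toReal hm2 hS'fin).mpr hS'big.le
    rwa [ENNReal.toReal_div, ENNReal.toReal_ofNat] at this
  -- key lower bound on I n for large n
  have hIbound : ∀ᶠ n in atTop, L + 1 ≤ I n := by
    have heδ : ∀ᶠ n in atTop, e n ≤ δ := he0.eventually_le_const hδpos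
    filter_upwards [heδ, eventually_ge_atTop n₀] with n hne hnn₀
    -- the integrand
    set f : ℝ → ℝ := fun s => k / ((if 0 < Y (e n) s then Y (e n) s else 0) + e n)
      with hfdef
    have hden : ∀ s, 0 < (if 0 < Y (e n) s then Y (e n) s else 0) + e n := by
      intro s
      rw [if_pos_eq_max]
      exact add_pos_of_nonneg_of_pos (le_max_right _ _) (hepos n)
    have hfc : Continuous f := by
      have hfeq : f = fun s => k / (max (Y (e n) s) 0 + e n) := by
        funext s; simp only [hfdef, if_pos_eq_max]
      rw [hfeq]
      exact continuous_const.div (((hYc _ (hepos n)).max continuous_const).add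
        continuous_const)
        (fun s => (add_pos_of_nonneg_of_pos (le_max_right _ _) (hepos n)).ne')
    have hfnn : ∀ s, 0 ≤ f s := fun s => div_nonneg hk.le (hden s).le
    have hfint : IntegrableOn f (Set.Ioc (0:ℝ) T) volume :=
      hfc.integrableOn_Ioc
    -- pointwise bound on S'
    have hfS' : ∀ s ∈ S', k / (2 * δ) ≤ f s := by
      intro s hs
      have hsY : Y (e n) s ≤ δ := by
        have := hs.1.2
        simp only [Set.mem_iInter, Set.mem_setOf_eq] at this
        exact this n hnn₀
      have hnum : (if 0 < Y (e n) s then Y (e n) s else 0) + e n ≤ 2 * δ := by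
        rw [if_pos_eq_max]
        have : max (Y (e n) s) 0 ≤ δ := max_le hsY hδpos.le
        linarith
      show k / (2 * δ) ≤ k / ((if 0 < Y (e n) s then Y (e n) s else 0) + e n)
      rw [div_le_div_iff₀ (by positivity) (hden s)]
      nlinarith [hden s]
    -- assemble the lower bound
    have h1 : I n = ∫ s in Set.Ioc (0:ℝ) T, f s := by
      rw [hIdef]
      exact intervalIntegral.integral_of_le hT.le
    have h2 : ∫ s in S', f s ≤ ∫ s in Set.Ioc (0:ℝ) T, f s := by
      apply setIntegral_mono_set hfint
        (Filter.Eventually.of_forall fun s => hfnn s)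
      exact (Set.inter_subset_right : S' ⊆ _).eventuallyLE
    have h3 : k / (2 * δ) * (volume S').toReal ≤ ∫ s in S', f s :=
      setIntegral_ge_of_const_le_real hS'meas hS'fin hfS'
        (hfint.mono_set Set.inter_subset_right)
    have h4 : k / (2 * δ) * (m.toReal / 2) ≤ k / (2 * δ) * (volume S').toReal := by
      apply mul_le_mul_of_nonneg_left hS'toReal
      positivity
    have h5 : k / (2 * δ) * (m.toReal / 2) = L + 1 := by
      rw [hδdef]
      field_simp
      ring
    linarith
  have : L + 1 ≤ L := ge_of_tendsto hIL hIbound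
  linarith
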